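/- Let n ≥ 1 and let a : ℕ → ℕ be periodic with period 2n (i.e., a(j + 2n) = a(j) for all j) with period sum ∑_{k=0}^{2n−1} a(k) ≤ n − 1. Then there exists an odd index i with i < 2n such that for every j > 0, 2 · ∑_{k=0}^{j−1} a(i + k) < j. -/
import Mathlib

private lemma sum_range_shift_aux (a : ℕ → ℕ) (m j : ℕ) :
    ∑ k ∈ Finset.range (m + j), a k
      = ∑ k ∈ Finset.range m, a k + ∑ k ∈ Finset.range j, a (m + k) := by
  induction j with
  | zero => simp
  | succ j ih =>
    rw [show m + (j + 1) = (m + j) + 1 from rfl, Finset.sum_range_succ,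
      Finset.sum_range_succ, ih]
    omega

private lemma window_sum_aux (n : ℕ) (a : ℕ → ℕ) (hper : ∀ j, a (j + 2 * n) = a j) :
    ∀ m, ∑ k ∈ Finset.range (2 * n), a (m + k) = ∑ k ∈ Finset.range (2 * n), a k := by
  intro m
  induction m with
  | zero => simp
  | succ m ih =>
    have h1 := Finset.sum_range_succ (fun k => a (m + k)) (2 * n)
    have h2 := Finset.sum_range_succ' (fun k => a (m + k)) (2 * n)
    simp only [Nat.add_zero] at h1 h2
    have h3 : ∑ k ∈ Finset.range (2 * n), a (m + (k + 1))
        = ∑ k ∈ Finset.range (2 * n), a (m + 1 + k) :=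
      Finset.sum_congr rfl (fun k _ => by rw [Nat.add_comm k 1, ← Nat.add_assoc])
    have h4 : a (m + 2 * n) = a m := hper m
    omega

/-- For any sequence of period `2n` with period sum at most `n - 1`, some odd rotation is
rotate-bounded: every prefix sum from that index is strictly less than half the prefix length. -/
theorem stmt_5 (n : ℕ) (hn : 1 ≤ n) (a : ℕ → ℕ)
    (hper : ∀ j, a (j + 2 * n) = a j)
    (hsum : ∑ k ∈ Finset.range (2 * n), a k ≤ n - 1) :
    ∃ i, i < 2 * n ∧ Odd i ∧
      ∀ j, 0 < j → 2 * ∑ k ∈ Finset.range j, a (i + k) < j := by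
  set s : ℕ := ∑ k ∈ Finset.range (2 * n), a k with hs
  set g : ℕ → ℤ := fun m => 2 * (∑ k ∈ Finset.range m, a k : ℕ) - m with hg
  have hgdef : ∀ m, g m = 2 * (∑ k ∈ Finset.range m, a k : ℕ) - m := fun m => rfl
  have hN : 0 < 2 * n := by omega
  -- step
  have gstep : ∀ m, g (m + 1) = g m + 2 * a m - 1 := by
    intro m
    rw [hgdef, hgdef, Finset.sum_range_succ]
    push_cast; ring
  -- one period shift
  have gshift : ∀ m, g (m + 2 * n) = g m + (2 * (s : ℤ) - 2 * n) := by
    intro m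
    rw [hgdef, hgdef, sum_range_shift_aux, window_sum_aux n a hper m, ← hs]
    push_cast; ring
  -- iterated shift
  have giter : ∀ q m, g (m + 2 * n * q) = g m + q * (2 * (s : ℤ) - 2 * n) := by
    intro q
    induction q with
    | zero => simp
    | succ q ih =>
      intro m
      have : m + 2 * n * (q + 1) = (m + 2 * n * q) + 2 * n := by ring
      rw [this, gshift, ih]
      push_cast; ring
  have hdrop : (2 * (s : ℤ) - 2 * n) ≤ -2 := by
    have : s + 1 ≤ n := by omega
    have : (s : ℤ) + 1 ≤ n := by exact_mod_cast this
    linarith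
  -- upper bound
  obtain ⟨B, hB⟩ : ∃ B : ℤ, ∀ r < 2 * n, g r ≤ B := by
    refine ⟨(Finset.range (2 * n)).sup' ⟨0, Finset.mem_range.2 hN⟩ g, fun r hr => ?_⟩
    exact Finset.le_sup' g (Finset.mem_range.2 hr)
  have hbound : ∀ m, g m ≤ B - 2 * (m / (2 * n) : ℕ) := by
    intro m
    have hmod : m % (2 * n) + 2 * n * (m / (2 * n)) = m := Nat.mod_add_div m (2 * n)
    have h1 := giter (m / (2 * n)) (m % (2 * n))
    rw [hmod] at h1
    have h2 : g (m % (2 * n)) ≤ B := hB _ (Nat.mod_lt m hN)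
    have h3 : ((m / (2 * n) : ℕ) : ℤ) * (2 * (s : ℤ) - 2 * n)
        ≤ ((m / (2 * n) : ℕ) : ℤ) * (-2) := by
      apply mul_le_mul_of_nonneg_left hdrop (by positivity)
    rw [h1]; linarith
  -- tail bound
  have htail : ∀ c : ℤ, ∃ M : ℕ, ∀ m, M ≤ m → g m < c := by
    intro c
    refine ⟨2 * n * ((B - c).toNat + 1), fun m hm => ?_⟩
    have hq : (B - c).toNat + 1 ≤ m / (2 * n) := by
      rw [Nat.le_div_iff_mul_le hN, Nat.mul_comm]; exact hm
    have h1 := hbound m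
    have h2 : (B - c : ℤ) ≤ ((B - c).toNat : ℤ) := Int.self_le_toNat _
    have h3 : ((B - c).toNat : ℤ) + 1 ≤ ((m / (2 * n) : ℕ) : ℤ) := by
      exact_mod_cast hq
    linarith
  -- choose the last odd argmax
  obtain ⟨M0, hM0⟩ := htail (g 1)
  set M : ℕ := max M0 2 with hM
  set S : Finset ℕ := (Finset.range M).filter (fun m => Odd m) with hSdef
  have h1S : 1 ∈ S := by
    simp only [hSdef, Finset.mem_filter, Finset.mem_range]
    exact ⟨by omega, ⟨0, by omega⟩⟩
  have hSne : S.Nonempty := ⟨1, h1S⟩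
  set Modd : ℤ := S.sup' hSne g with hModd
  have hle1 : g 1 ≤ Modd := Finset.le_sup' g h1S
  have hub : ∀ m, Odd m → g m ≤ Modd := by
    intro m hm
    by_cases hlt : m < M
    · exact Finset.le_sup' g (by simp [hSdef, Finset.mem_filter, Finset.mem_range, hlt, hm])
    · have := hM0 m (by omega)
      linarith
  obtain ⟨i0, hi0S, hi0⟩ := Finset.exists_mem_eq_sup' hSne g
  set T : Finset ℕ := S.filter (fun m => g m = Modd) with hTdef
  have hTne : T.Nonempty := by
    refine ⟨i0, ?_⟩
    rw [hTdef, Finset.mem_filter]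
    exact ⟨hi0S, by rw [hModd, ← hi0]⟩
  set i : ℕ := T.max' hTne with hidef
  have hiT : i ∈ T := T.max'_mem hTne
  have hiS : i ∈ S := (Finset.mem_filter.1 hiT).1
  have hgi : g i = Modd := (Finset.mem_filter.1 hiT).2
  have hiodd : Odd i := (Finset.mem_filter.1 hiS).2
  -- odd indices after i are strictly below Modd
  have hlast : ∀ m, Odd m → i < m → g m < Modd := by
    intro m hm him
    rcases lt_or_ge (g m) Modd with h | h
    · exact h
    · exfalso
      have heq : g m = Modd := le_antisymm (hub m hm) h
      by_cases hlt : m < M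
      · have hmT : m ∈ T := by
          simp [hTdef, Finset.mem_filter, hSdef, Finset.mem_range, hlt, hm, heq]
        have := T.le_max' m hmT
        omega
      · have := hM0 m (by omega)
        linarith
  -- i is a strict right record
  have hrecord : ∀ m, i < m → g m < g i := by
    intro m him
    rw [hgi]
    rcases Nat.even_or_odd m with hme | hmo
    · -- even case
      by_contra hcon
      push_neg at hcon
      have h1 : g (m + 1) = g m + 2 * a m - 1 := gstep m
      have h2 : g (m + 1) < Modd := hlast (m + 1) (Even.add_one hme) (by omega)
      have hgm : g m = Modd := by
        have : g m - 1 ≤ g (m + 1) := by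
          have : (0 : ℤ) ≤ 2 * a m := by positivity
          linarith
        linarith
      -- parity contradiction: g m + m even, g i + i even, m even, i odd, g m = g i
      have p1 : (2 : ℤ) ∣ (g m + m) := ⟨(∑ k ∈ Finset.range m, a k : ℕ), by rw [hgdef]; ring⟩
      have p2 : (2 : ℤ) ∣ (g i + i) := ⟨(∑ k ∈ Finset.range i, a k : ℕ), by rw [hgdef]; ring⟩
      obtain ⟨r, hr⟩ := hme
      obtain ⟨t, ht⟩ := hiodd
      rw [hgi] at p2
      have hrZ : (m : ℤ) = 2 * r := by exact_mod_cast hr.trans (by ring)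
      have htZ : (i : ℤ) = 2 * t + 1 := by exact_mod_cast ht
      rw [hgm, hrZ] at p1
      rw [htZ] at p2
      omega
    · exact hlast m hmo him
  -- the rotate-bounded condition
  set C : ℕ → Prop := fun x => ∀ j, 0 < j → 2 * ∑ k ∈ Finset.range j, a (x + k) < j with hC
  have hCi : C i := by
    intro j hj
    have h1 : g (i + j) < g i := hrecord (i + j) (by omega)
    rw [hgdef, hgdef, sum_range_shift_aux] at h1
    push_cast at h1
    have : 2 * ((∑ k ∈ Finset.range j, a (i + k) : ℕ) : ℤ) < j := by push_cast; linarith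
    exact_mod_cast this
  -- reduce modulo 2n
  have hred1 : ∀ x, C (x + 2 * n) → C x := by
    intro x hx j hj
    have heq : ∑ k ∈ Finset.range j, a (x + k) = ∑ k ∈ Finset.range j, a (x + 2 * n + k) := by
      apply Finset.sum_congr rfl
      intro k _
      have : x + 2 * n + k = (x + k) + 2 * n := by ring
      rw [this, hper]
    rw [heq]
    exact hx j hj
  have hred : ∀ q x, C (x + 2 * n * q) → C x := by
    intro q
    induction q with
    | zero => intro x h; simpa using h
    | succ q ih =>
      intro x h
      apply ih
      apply hred1
      have : x + 2 * n * q + 2 * n = x + 2 * n * (q + 1) := by ring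
      rw [this]
      exact h
  refine ⟨i % (2 * n), Nat.mod_lt i hN, ?_, ?_⟩
  · obtain ⟨t, ht⟩ := hiodd
    have := Nat.mod_add_div i (2 * n)
    have heven : 2 * n * (i / (2 * n)) = 2 * (n * (i / (2 * n))) := by ring
    rcases Nat.even_or_odd (i % (2 * n)) with he | ho
    · exfalso; obtain ⟨r, hr⟩ := he; omega
    · exact ho
  · apply hred (i / (2 * n))
    have : i % (2 * n) + 2 * n * (i / (2 * n)) = i := Nat.mod_add_div i (2 * n)
    rw [this]
    exact hCi
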